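/- If x* maximizes the linear function ⟪c, ·⟫ over the convex set P = {x ∈ ℝⁿ : ∀ j, ⟪a_j, x⟫ ≤ b_j} (finitely many constraints), then c lies in the convex cone generated by the normal vectors a_j of the constraints that are active at x*, i.e., those j with ⟪a_j, x*⟫ = b_j. -/

import Mathlib

open RealInnerProductSpace

/-- Farkas' lemma in a real inner product space, proved by induction on the
number of generators. -/
theorem farkas_aux {E : Type*} [NormedAddCommGroup E] [InnerProductSpace ℝ E] :
    ∀ (m : ℕ) (a : Fin m → E) (c : E),
      (∀ d : E, (∀ j, ⟪a j, d⟫ ≤ 0) → ⟪c, d⟫ ≤ 0) →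
      ∃ lam : Fin m → ℝ, (∀ j, 0 ≤ lam j) ∧ c = ∑ j, lam j • a j := by
  intro m
  induction m with
  | zero =>
    intro a c h
    have hc : ⟪c, c⟫ ≤ 0 := h c (fun j => j.elim0)
    have : c = 0 := by
      have := real_inner_self_nonpos.mp hc
      exact this
    exact ⟨fun j => 0, fun j => le_refl 0, by simp [this]⟩
  | succ m ih =>
    intro a c h
    set a0 : Fin m → E := Fin.init a with ha0
    set aL : E := a (Fin.last m) with haL
    by_cases hcase : ∀ d : E, (∀ j : Fin m, ⟪a0 j, d⟫ ≤ 0) → ⟪c, d⟫ ≤ 0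
    · obtain ⟨lam, hlam, hsum⟩ := ih a0 c hcase
      refine ⟨Fin.snoc lam 0, ?_, ?_⟩
      · intro j
        refine Fin.lastCases ?_ ?_ j
        · simp
        · intro i; simpa using hlam i
      · rw [Fin.sum_univ_castSucc]
        simp only [Fin.snoc_castSucc, Fin.snoc_last, zero_smul, add_zero]
        exact hsum
    · push_neg at hcase
      obtain ⟨d0, hd0, hcd0⟩ := hcase
      -- ⟪aL, d0⟫ must be positive
      have hs : 0 < ⟪aL, d0⟫ := by
        by_contra hs
        push_neg at hs
        have : ∀ j : Fin (m + 1), ⟪a j, d0⟫ ≤ 0 := by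
          intro j
          refine Fin.lastCases ?_ ?_ j
          · exact hs
          · intro i; exact hd0 i
        exact absurd (h d0 this) (not_le.mpr hcd0)
      set s : ℝ := ⟪aL, d0⟫ with hsdef
      set a' : Fin m → E := fun j => a0 j - (⟪a0 j, d0⟫ / s) • aL with ha'
      set c' : E := c - (⟪c, d0⟫ / s) • aL with hc'
      have key : ∀ d : E, (∀ j : Fin m, ⟪a' j, d⟫ ≤ 0) → ⟪c', d⟫ ≤ 0 := by
        intro d hd
        set d' : E := d - (⟪aL, d⟫ / s) • d0 with hd'
        have hall : ∀ j : Fin (m + 1), ⟪a j, d'⟫ ≤ 0 := by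
          intro j
          refine Fin.lastCases ?_ ?_ j
          · rw [hd']
            rw [inner_sub_right, real_inner_smul_right]
            rw [← hsdef]
            field_simp
            simp [haL]
          · intro i
            have := hd i
            rw [ha'] at this
            simp only [inner_sub_left, real_inner_smul_left] at this
            rw [hd', inner_sub_right, real_inner_smul_right]
            have heq : ⟪a0 i, d⟫ - ⟪aL, d⟫ / s * ⟪a0 i, d0⟫
                = ⟪a0 i, d⟫ - ⟪a0 i, d0⟫ / s * ⟪aL, d⟫ := by ring
            have : ⟪(a0 i : E), d⟫ - ⟪a0 i, d0⟫ / s * ⟪aL, d⟫ ≤ 0 := this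
            have h2 : ⟪(Fin.castSucc i : Fin (m+1)) |> a, d⟫ = ⟪a0 i, d⟫ := by
              simp [ha0, Fin.init]
            calc ⟪a (Fin.castSucc i), d⟫ - ⟪aL, d⟫ / s * ⟪a (Fin.castSucc i), d0⟫
                = ⟪a0 i, d⟫ - ⟪aL, d⟫ / s * ⟪a0 i, d0⟫ := by simp [ha0, Fin.init]
              _ = ⟪a0 i, d⟫ - ⟪a0 i, d0⟫ / s * ⟪aL, d⟫ := heq
              _ ≤ 0 := this
        have hcd' : ⟪c, d'⟫ ≤ 0 := h d' hall
        rw [hd', inner_sub_right, real_inner_smul_right] at hcd'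
        rw [hc', inner_sub_left, real_inner_smul_left]
        calc ⟪c, d⟫ - ⟪c, d0⟫ / s * ⟪aL, d⟫
            = ⟪c, d⟫ - ⟪aL, d⟫ / s * ⟪c, d0⟫ := by ring
          _ ≤ 0 := hcd'
      obtain ⟨mu, hmu, hmusum⟩ := ih a' c' key
      set t : ℝ := ⟪c, d0⟫ / s - ∑ j, mu j * (⟪a0 j, d0⟫ / s) with ht
      have htpos : 0 ≤ t := by
        rw [ht]
        have h1 : 0 < ⟪c, d0⟫ / s := div_pos hcd0 hs
        have h2 : ∑ j, mu j * (⟪a0 j, d0⟫ / s) ≤ 0 := by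
          apply Finset.sum_nonpos
          intro j _
          exact mul_nonpos_of_nonneg_of_nonpos (hmu j)
            (div_nonpos_of_nonpos_of_nonneg (hd0 j) hs.le)
        linarith
      refine ⟨Fin.snoc mu t, ?_, ?_⟩
      · intro j
        refine Fin.lastCases ?_ ?_ j
        · simpa using htpos
        · intro i; simpa using hmu i
      · rw [Fin.sum_univ_castSucc]
        simp only [Fin.snoc_castSucc, Fin.snoc_last]
        have hceq : c = c' + (⟪c, d0⟫ / s) • aL := by rw [hc']; abel
        have expand : ∑ j, mu j • a' j
            = ∑ j, mu j • a0 j - (∑ j, mu j * (⟪a0 j, d0⟫ / s)) • aL := by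
          simp only [ha', smul_sub, smul_smul, Finset.sum_sub_distrib,
            Finset.sum_smul]
        have ha0eq : ∀ i : Fin m, a0 i = a (Fin.castSucc i) := fun i => rfl
        rw [hceq, hmusum, expand, ht, sub_smul]
        simp only [ha0eq]
        abel

theorem gradient_in_normal_cone_of_active {n m : ℕ}
    (a : Fin m → EuclideanSpace ℝ (Fin n)) (b : Fin m → ℝ)
    (c : EuclideanSpace ℝ (Fin n))
    (xstar : EuclideanSpace ℝ (Fin n))
    (hxP : ∀ j, ⟪a j, xstar⟫ ≤ b j)
    (hxmax : ∀ y : EuclideanSpace ℝ (Fin n), (∀ j, ⟪a j, y⟫ ≤ b j) →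
      ⟪c, y⟫ ≤ ⟪c, xstar⟫) :
    ∃ lam : Fin m → ℝ, (∀ j, 0 ≤ lam j) ∧
      (∀ j, lam j ≠ 0 → ⟪a j, xstar⟫ = b j) ∧
      c = ∑ j, lam j • a j := by
  classical
  set a' : Fin m → EuclideanSpace ℝ (Fin n) :=
    fun j => if ⟪a j, xstar⟫ = b j then a j else 0 with ha'
  have hyp : ∀ d, (∀ j, ⟪a' j, d⟫ ≤ 0) → ⟪c, d⟫ ≤ 0 := by
    intro d hd
    by_contra hc
    push_neg at hc
    set δ : Fin m → ℝ := fun j =>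
      if ⟪a j, xstar⟫ = b j then 1
      else (b j - ⟪a j, xstar⟫) / (|⟪a j, d⟫| + 1) with hδ
    have hδpos : ∀ j, 0 < δ j := by
      intro j; rw [hδ]; dsimp only
      split_ifs with h
      · norm_num
      · apply div_pos
        · exact sub_pos.mpr (lt_of_le_of_ne (hxP j) h)
        · positivity
    set S : Finset ℝ := insert 1 (Finset.image δ Finset.univ) with hS
    have hSne : S.Nonempty := ⟨1, Finset.mem_insert_self _ _⟩
    set ε : ℝ := S.min' hSne with hε
    have hεpos : 0 < ε := by
      rw [hε, Finset.lt_min'_iff]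
      intro y hy
      rw [hS] at hy
      rcases Finset.mem_insert.mp hy with h | h
      · rw [h]; norm_num
      · obtain ⟨j, _, rfl⟩ := Finset.mem_image.mp h
        exact hδpos j
    have hεle : ∀ j, ε ≤ δ j := fun j =>
      Finset.min'_le _ _ (Finset.mem_insert_of_mem
        (Finset.mem_image_of_mem _ (Finset.mem_univ j)))
    set y : EuclideanSpace ℝ (Fin n) := xstar + ε • d with hy
    have hfeas : ∀ j, ⟪a j, y⟫ ≤ b j := by
      intro j
      rw [hy, inner_add_right, real_inner_smul_right]
      by_cases h : ⟪a j, xstar⟫ = b j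
      · have hdj := hd j
        rw [ha'] at hdj
        simp only [h, if_pos] at hdj
        have : ⟪a j, d⟫ ≤ 0 := by simpa [h] using hdj
        nlinarith
      · have h1 : ε * ⟪a j, d⟫ ≤ δ j * (|⟪a j, d⟫| + 1) := by
          nlinarith [abs_nonneg ⟪a j, d⟫, le_abs_self ⟪a j, d⟫, hεle j,
            hεpos, hδpos j]
        have h2 : δ j * (|⟪a j, d⟫| + 1) = b j - ⟪a j, xstar⟫ := by
          rw [hδ]; dsimp only; rw [if_neg h]
          field_simp
        linarith
    have := hxmax y hfeas
    rw [hy, inner_add_right, real_inner_smul_right] at this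
    nlinarith
  obtain ⟨lam, hlam, hsum⟩ := farkas_aux m a' c hyp
  refine ⟨fun j => if ⟪a j, xstar⟫ = b j then lam j else 0, ?_, ?_, ?_⟩
  · intro j; dsimp only; split_ifs
    · exact hlam j
    · exact le_refl 0
  · intro j hj
    by_contra hact
    exact hj (if_neg hact)
  · rw [hsum]
    apply Finset.sum_congr rfl
    intro j _
    rw [ha']; dsimp only
    split_ifs <;> simp
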